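/- For any sequence of vectors x_1,...,x_T in ℝ^d with ‖x_t‖ ≤ L, and V_t = λI + Σ_{s≤t} x_s x_sᵀ with λ > 0, the elliptical potential bound holds: Σ_{t=1}^T min(1, ‖x_t‖²_{V_{t-1}^{-1}}) ≤ 2 d log(1 + T L² / (λ d)), where ‖x‖²_{V^{-1}} = xᵀ V^{-1} x. -/

import Mathlib

open Matrix

lemma ep_exp_half_le_two : Real.exp (1/2 : ℝ) ≤ 2 := by
  nlinarith [Real.exp_one_lt_d9, Real.exp_pos (1/2 : ℝ),
    (by rw [← Real.exp_add]; norm_num : Real.exp (1/2 : ℝ) * Real.exp (1/2 : ℝ) = Real.exp 1)]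

lemma ep_min_le_two_log (u : ℝ) (hu : 0 ≤ u) : min 1 u ≤ 2 * Real.log (1 + u) := by
  rcases le_or_gt u 1 with h | h
  · rw [min_eq_right h]
    have hexp : Real.exp (u / 2) ≤ 1 + u := by
      have hc := convexOn_exp.2 (Set.mem_univ (0:ℝ)) (Set.mem_univ (1/2 : ℝ))
        (by linarith : (0:ℝ) ≤ 1 - u) hu (by ring)
      simp only [smul_eq_mul, mul_zero, zero_add, Real.exp_zero, mul_one] at hc
      have : u * (1/2 : ℝ) = u / 2 := by ring
      rw [this] at hc
      nlinarith [ep_exp_half_le_two]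
    have := (Real.le_log_iff_exp_le (by linarith : (0:ℝ) < 1 + u)).2 hexp
    linarith
  · rw [min_eq_left h.le]
    have hexp : Real.exp (1/2 : ℝ) ≤ 1 + u := le_trans ep_exp_half_le_two (by linarith)
    have := (Real.le_log_iff_exp_le (by linarith : (0:ℝ) < 1 + u)).2 hexp
    linarith

/-- AM-GM: product ≤ (sum/n)^n for nonnegative reals. -/
lemma ep_prod_le_pow {n : ℕ} (hn : 0 < n) (z : Fin n → ℝ) (hz : ∀ i, 0 ≤ z i) :
    ∏ i, z i ≤ ((∑ i, z i) / n) ^ n := by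
  have hn' : (0:ℝ) < n := Nat.cast_pos.2 hn
  have hgm := Real.geom_mean_le_arith_mean_weighted Finset.univ (fun _ => (n:ℝ)⁻¹) z
    (fun _ _ => by positivity)
    (by simp [Finset.card_univ]; field_simp)
    (fun i _ => hz i)
  have hprod : ∏ i, z i = (∏ i, z i ^ ((n:ℝ)⁻¹)) ^ n := by
    rw [← Finset.prod_pow]
    refine Finset.prod_congr rfl fun i _ => ?_
    rw [← Real.rpow_natCast (z i ^ ((n:ℝ)⁻¹)) n, ← Real.rpow_mul (hz i),
      inv_mul_cancel₀ hn'.ne', Real.rpow_one]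
  rw [hprod]
  have hsum : ∑ i, (n:ℝ)⁻¹ * z i = (∑ i, z i) / n := by
    rw [← Finset.mul_sum]; ring
  rw [hsum] at hgm
  exact pow_le_pow_left₀ (Finset.prod_nonneg fun i _ => Real.rpow_nonneg (hz i) _) hgm n

lemma ep_trace_eq_sum_eigenvalues {n : ℕ} (A : Matrix (Fin n) (Fin n) ℝ) (hA : A.IsHermitian) :
    A.trace = ∑ i, hA.eigenvalues i := by
  nth_rewrite 1 [hA.spectral_theorem]
  rw [Unitary.conjStarAlgAut_apply]
  rw [Matrix.trace_mul_cycle,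
    (Matrix.mem_unitaryGroup_iff').mp (Matrix.IsHermitian.eigenvectorUnitary hA).2, one_mul,
    Matrix.trace_diagonal]
  simp

lemma ep_det_add_vecMulVec {n : ℕ} (A : Matrix (Fin n) (Fin n) ℝ) (hA : A.PosDef)
    (u : Fin n → ℝ) :
    (A + vecMulVec u u).det = A.det * (1 + u ⬝ᵥ A⁻¹ *ᵥ u) := by
  rw [vecMulVec_eq Unit, Matrix.det_add_replicateCol_mul_replicateRow (isUnit_iff_ne_zero.2 hA.det_pos.ne') u u]
  congr 1
  rw [det_unique]
  simp [Matrix.mul_apply, dotProduct, mulVec, Finset.mul_sum, mul_comm]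
  rw [Finset.sum_comm]
  exact Finset.sum_congr rfl fun i _ => Finset.sum_congr rfl fun j _ => by ring

/-- Elliptical potential lemma: `∑_t min(1, ‖x_t‖²_{V_{t-1}⁻¹}) ≤ 2d log(1 + TL²/(λd))`. -/
theorem elliptical_potential (d T : ℕ) (hd : 0 < d) (L lam : ℝ) (hlam : 0 < lam)
    (x : ℕ → Fin d → ℝ) (hx : ∀ t, Real.sqrt (∑ i, (x t i) ^ 2) ≤ L)
    (V : ℕ → Matrix (Fin d) (Fin d) ℝ)
    (hV : ∀ n, V n = lam • (1 : Matrix (Fin d) (Fin d) ℝ)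
        + ∑ s ∈ Finset.range n, Matrix.vecMulVec (x s) (x s)) :
    ∑ t ∈ Finset.range T, min 1 (x t ⬝ᵥ ((V t)⁻¹ *ᵥ x t))
      ≤ 2 * d * Real.log (1 + T * L ^ 2 / (lam * d)) := by
  have hd' : (0:ℝ) < d := Nat.cast_pos.2 hd
  have hL0 : (0:ℝ) ≤ L := le_trans (Real.sqrt_nonneg _) (hx 0)
  -- squared norm bound
  have hxs : ∀ s, ∑ i, (x s i) ^ 2 ≤ L ^ 2 := by
    intro s
    have h1 : (0:ℝ) ≤ ∑ i, (x s i) ^ 2 := by positivity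
    calc ∑ i, (x s i) ^ 2 = (Real.sqrt (∑ i, (x s i) ^ 2)) ^ 2 := (Real.sq_sqrt h1).symm
      _ ≤ L ^ 2 := pow_le_pow_left₀ (Real.sqrt_nonneg _) (hx s) 2
  -- positive definiteness
  have hpsd : ∀ s, (vecMulVec (x s) (x s)).PosSemidef := by
    intro s
    rw [vecMulVec_eq Unit]
    have := Matrix.posSemidef_conjTranspose_mul_self (replicateRow Unit (x s))
    simpa [Matrix.conjTranspose_replicateRow] using this
  have hsumpsd : ∀ n, (∑ s ∈ Finset.range n, vecMulVec (x s) (x s)).PosSemidef := by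
    intro n
    induction n with
    | zero => simpa using Matrix.PosSemidef.zero
    | succ n ih => rw [Finset.sum_range_succ]; exact ih.add (hpsd n)
  have hpos : ∀ n, (V n).PosDef := by
    intro n
    rw [hV n]
    refine Matrix.PosDef.add_posSemidef ?_ (hsumpsd n)
    rw [smul_one_eq_diagonal]
    exact Matrix.PosDef.diagonal (fun _ => hlam)
  -- nonnegativity of the quadratic forms
  have hu0 : ∀ t, 0 ≤ x t ⬝ᵥ (V t)⁻¹ *ᵥ x t := by
    intro t
    have h := ((hpos t).inv).posSemidef.dotProduct_mulVec_nonneg (x t)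
    simpa using h
  -- determinant recursion
  have hdet : ∀ t, (V (t+1)).det = (V t).det * (1 + x t ⬝ᵥ (V t)⁻¹ *ᵥ x t) := by
    intro t
    have hVt : V (t+1) = V t + vecMulVec (x t) (x t) := by
      rw [hV, hV, Finset.sum_range_succ, add_assoc]
    rw [hVt, ep_det_add_vecMulVec (V t) (hpos t)]
  -- telescoping sum of logs
  have hsumlog : ∑ t ∈ Finset.range T, Real.log (1 + x t ⬝ᵥ (V t)⁻¹ *ᵥ x t)
      = Real.log ((V T).det) - Real.log ((V 0).det) := by
    rw [← Finset.sum_range_sub (fun t => Real.log ((V t).det)) T]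
    refine Finset.sum_congr rfl fun t _ => ?_
    rw [hdet t, Real.log_mul (hpos t).det_pos.ne' (by have := hu0 t; positivity)]
    ring
  have hdet0 : Real.log ((V 0).det) = d * Real.log lam := by
    rw [hV 0]
    simp [Matrix.det_smul, Real.log_pow]
  -- trace computation
  have htr_eq : (V T).trace = lam * d + ∑ s ∈ Finset.range T, ∑ i, (x s i) ^ 2 := by
    rw [hV T, Matrix.trace_add, Matrix.trace_smul, Matrix.trace_one, Matrix.trace_sum]
    congr 1
    · simp [smul_eq_mul]
    · refine Finset.sum_congr rfl fun s _ => ?_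
      simp [Matrix.trace, Matrix.diag, vecMulVec, sq]
  have htrle : (V T).trace ≤ lam * d + T * L ^ 2 := by
    rw [htr_eq]
    have : ∑ s ∈ Finset.range T, ∑ i, (x s i) ^ 2 ≤ ∑ s ∈ Finset.range T, L ^ 2 :=
      Finset.sum_le_sum fun s _ => hxs s
    simpa [Finset.sum_const, Finset.card_range, nsmul_eq_mul] using this
  have htrpos : (0:ℝ) < (V T).trace := by
    rw [htr_eq]
    have : (0:ℝ) ≤ ∑ s ∈ Finset.range T, ∑ i, (x s i) ^ 2 := by positivity
    nlinarith
  -- determinant upper bound via AM-GM on eigenvalues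
  have hH := (hpos T).isHermitian
  have hdetle : (V T).det ≤ ((V T).trace / d) ^ d := by
    have h1 : (V T).det = ∏ i, hH.eigenvalues i := by
      rw [hH.det_eq_prod_eigenvalues]; norm_num
    rw [h1, ep_trace_eq_sum_eigenvalues (V T) hH]
    exact ep_prod_le_pow hd hH.eigenvalues
      (fun i => ((hpos T).posSemidef.eigenvalues_nonneg i))
  -- log det bound
  have hlogdet : Real.log ((V T).det) ≤ d * Real.log ((lam * d + T * L ^ 2) / d) := by
    calc Real.log ((V T).det) ≤ Real.log (((V T).trace / d) ^ d) :=
          Real.log_le_log (hpos T).det_pos hdetle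
      _ = d * Real.log ((V T).trace / d) := by rw [Real.log_pow]
      _ ≤ d * Real.log ((lam * d + T * L ^ 2) / d) := by
          refine mul_le_mul_of_nonneg_left ?_ hd'.le
          exact Real.log_le_log (by positivity) (div_le_div_of_nonneg_right htrle hd'.le)
  -- final algebra
  have hfinal : (1:ℝ) + T * L ^ 2 / (lam * d) = ((lam * d + T * L ^ 2) / d) / lam := by
    rw [div_div, mul_comm (d:ℝ) lam, add_div,
      div_self (by positivity : (lam * (d:ℝ)) ≠ 0)]
  have hlog_eq : Real.log (1 + T * L ^ 2 / (lam * d))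
      = Real.log ((lam * d + T * L ^ 2) / d) - Real.log lam := by
    rw [hfinal, Real.log_div (by positivity) hlam.ne']
  calc ∑ t ∈ Finset.range T, min 1 (x t ⬝ᵥ ((V t)⁻¹ *ᵥ x t))
      ≤ ∑ t ∈ Finset.range T, 2 * Real.log (1 + x t ⬝ᵥ (V t)⁻¹ *ᵥ x t) :=
        Finset.sum_le_sum fun t _ => ep_min_le_two_log _ (hu0 t)
    _ = 2 * (Real.log ((V T).det) - Real.log ((V 0).det)) := by
        rw [← Finset.mul_sum, hsumlog]
    _ ≤ 2 * (d * Real.log ((lam * d + T * L ^ 2) / d) - d * Real.log lam) := by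
        rw [hdet0]; linarith [hlogdet]
    _ = 2 * d * Real.log (1 + T * L ^ 2 / (lam * d)) := by
        rw [hlog_eq]; ring
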